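/- Let n ≥ 1, let Ω ⊆ ℂ be open, and let λ_1, ..., λ_n : Ω → ℂ and f : Ω → ℂ. Suppose γ : [0, ∞) → Ω is a curve with limit z* ∈ Ω such that: (i) each λ_j is analytic and nonvanishing near z*; (ii) the products ∏_{j' ≠ j} λ_{j'}, j = 1, ..., n, are linearly independent; (iii) f(γ(t)) → +∞ and for every polynomial rate s, |γ(t) - z*|^s · e^{c f(γ(t))} → ∞ for each c > 0. If a_1, ..., a_n ∈ ℝ satisfy ∑_{j=1}^n a_j / (1 + λ_j(z) e^{w f(z)}) ≡ 0 on Ω for some w > 0, and the common denominator expansion gives numerator [∑_j a_j ∏_{j'≠j} λ_{j'}(z)] e^{(n-1)w f(z)} + lower-order terms, then in fact ∑_j a_j ∏_{j'≠j} λ_{j'} ≡ 0 near z*, and hence a_1 = ... = a_n = 0. -/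

import Mathlib

open Filter

set_option maxHeartbeats 1000000

theorem stmt_14 (n : ℕ) (hn : 1 ≤ n) (Ω : Set ℂ) (hΩ : IsOpen Ω)
    (lam : Fin n → ℂ → ℂ) (f : ℂ → ℂ)
    (γ : ℝ → ℂ) (zs : ℂ) (hzs : zs ∈ Ω)
    (hγΩ : ∀ t, γ t ∈ Ω)
    (hγlim : Tendsto γ atTop (nhds zs))
    (hanal : ∀ j, ∃ U ∈ nhds zs, AnalyticOn ℂ (lam j) U ∧ ∀ z ∈ U, lam j z ≠ 0)
    (hli : ∀ c : Fin n → ℂ,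
      (∀ᶠ z in nhds zs, ∑ j, c j * ∏ j' ∈ Finset.univ.erase j, lam j' z = 0) →
      c = 0)
    (hfdiv : Tendsto (fun t => (f (γ t)).re) atTop atTop)
    (hdom : ∀ s : ℕ, ∀ c > (0:ℝ),
      Tendsto (fun t => ‖γ t - zs‖ ^ s * Real.exp (c * (f (γ t)).re)) atTop atTop)
    (a : Fin n → ℝ) (w : ℝ) (hw : 0 < w)
    (hzero : ∀ z ∈ Ω,
      ∑ j, (a j : ℂ) / (1 + lam j z * Complex.exp (w * f z)) = 0) :
    (∀ᶠ z in nhds zs,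
      ∑ j, (a j : ℂ) * ∏ j' ∈ Finset.univ.erase j, lam j' z = 0) ∧ a = 0 := by
  classical
  have hAj : ∀ j, AnalyticAt ℂ (lam j) zs ∧ lam j zs ≠ 0 := by
    intro j
    obtain ⟨U, hU, hA, hne⟩ := hanal j
    refine ⟨?_, hne zs (mem_of_mem_nhds hU)⟩
    obtain ⟨g, -, hEq, hgA⟩ := (hA zs (mem_of_mem_nhds hU)).exists_analyticAt
    apply hgA.congr
    filter_upwards [hU] with z hz
    exact (hEq (Set.mem_insert_of_mem _ hz)).symm
  set G : ℂ → ℂ := fun z => ∑ j, (a j : ℂ) * ∏ j' ∈ Finset.univ.erase j, lam j' z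
    with hGdef
  have hGA : AnalyticAt ℂ G zs := by
    apply Finset.analyticAt_fun_sum
    intro j _
    exact analyticAt_const.mul (Finset.analyticAt_fun_prod _ fun j' _ => (hAj j').1)
  have hnormE : ∀ z : ℂ, ‖Complex.exp ((w : ℂ) * f z)‖ = Real.exp (w * (f z).re) := by
    intro z
    rw [Complex.norm_exp]
    congr 1
    simp [Complex.mul_re]
  have key : ∀ᶠ z in nhds zs, G z = 0 := by
    rcases eq_or_ne (analyticOrderAt G zs) ⊤ with hord | hord
    · exact analyticOrderAt_eq_top.mp hord
    exfalso
    obtain ⟨k, hk⟩ := WithTop.ne_top_iff_exists.mp hord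
    obtain ⟨h, hhA, hh0, hGh⟩ := (hGA.analyticOrderAt_eq_natCast (n := k)).mp hk.symm
    set M : ℝ := 1 + ∑ j, ‖lam j zs‖ with hMdef
    have hM1 : (1:ℝ) ≤ M :=
      le_add_of_nonneg_right (Finset.sum_nonneg fun _ _ => norm_nonneg _)
    set c : ℝ := ‖h zs‖ / 2 with hcdef
    have hc : 0 < c := by
      have : 0 < ‖h zs‖ := norm_pos_iff.mpr hh0
      positivity
    set A : ℝ := (∑ j, ‖(a j : ℂ)‖) * ((2:ℝ) ^ (n - 1) - 1) * M ^ (n - 2) with hAdef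
    set B : ℝ := A / c with hBdef
    have hEtend : Tendsto (fun t => Real.exp (w * (f (γ t)).re)) atTop atTop := by
      simpa using hdom 0 w hw
    have ev1 : ∀ᶠ t in atTop, ∀ j, ‖lam j (γ t)‖ ≤ M := by
      rw [eventually_all]
      intro j
      have hcomp : Tendsto (fun t => ‖lam j (γ t)‖) atTop (nhds ‖lam j zs‖) :=
        ((hAj j).1.continuousAt.tendsto.comp hγlim).norm
      have hlt : ‖lam j zs‖ < M := by
        have := Finset.single_le_sum (f := fun j => ‖lam j zs‖)
          (fun i _ => norm_nonneg _) (Finset.mem_univ j)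
        simp only [hMdef]; linarith
      exact (hcomp.eventually_lt_const hlt).mono fun t ht => ht.le
    have ev2 : ∀ᶠ t in atTop,
        ∀ j, (2:ℝ) ≤ ‖lam j (γ t) * Complex.exp ((w : ℂ) * f (γ t))‖ := by
      rw [eventually_all]
      intro j
      have hpos : 0 < ‖lam j zs‖ := norm_pos_iff.mpr (hAj j).2
      have hcomp : Tendsto (fun t => ‖lam j (γ t)‖) atTop (nhds ‖lam j zs‖) :=
        ((hAj j).1.continuousAt.tendsto.comp hγlim).norm
      have hmul : Tendsto
          (fun t => ‖lam j (γ t)‖ * Real.exp (w * (f (γ t)).re)) atTop atTop :=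
        Tendsto.pos_mul_atTop hpos hcomp hEtend
      filter_upwards [hmul.eventually_ge_atTop 2] with t ht
      rw [norm_mul, hnormE]
      exact ht
    have ev3 : ∀ᶠ t in atTop, (1:ℝ) ≤ ‖Complex.exp ((w : ℂ) * f (γ t))‖ := by
      filter_upwards [hEtend.eventually_ge_atTop 1] with t ht
      rw [hnormE]; exact ht
    have ev4 : ∀ᶠ t in atTop, G (γ t) = (γ t - zs) ^ k * h (γ t) := by
      filter_upwards [hγlim.eventually hGh] with t ht
      simpa [smul_eq_mul] using ht
    have ev5 : ∀ᶠ t in atTop, c ≤ ‖h (γ t)‖ := by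
      have hcomp : Tendsto (fun t => ‖h (γ t)‖) atTop (nhds ‖h zs‖) :=
        (hhA.continuousAt.tendsto.comp hγlim).norm
      have hlt : c < ‖h zs‖ := half_lt_self (norm_pos_iff.mpr hh0)
      exact (hcomp.eventually_const_lt hlt).mono fun t ht => ht.le
    have ev6 : ∀ᶠ t in atTop,
        B < ‖γ t - zs‖ ^ k * Real.exp (w * (f (γ t)).re) :=
      (hdom k w hw).eventually_gt_atTop B
    obtain ⟨t, h1, h2, h3, h4, h5, h6⟩ :=
      (ev1.and (ev2.and (ev3.and (ev4.and (ev5.and ev6))))).exists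
    set z : ℂ := γ t with hzdef
    set E : ℂ := Complex.exp ((w : ℂ) * f z) with hEdef
    set u : Fin n → ℂ := fun j => 1 + lam j z * E with hudef
    have hu : ∀ j, u j ≠ 0 := by
      intro j hj0
      have hne : lam j z * E = -1 := by
        have := hj0
        simp only [hudef] at this
        linear_combination this
      have := h2 j
      rw [hne] at this
      norm_num at this
    -- step A : the cleared-denominator identity
    have hsum0 : ∑ j, (a j : ℂ) * ∏ j' ∈ Finset.univ.erase j, u j' = 0 := by
      have h0 := hzero z (hγΩ t)
      have heq : (∑ j, (a j : ℂ) / u j) * ∏ j', u j'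
          = ∑ j, (a j : ℂ) * ∏ j' ∈ Finset.univ.erase j, u j' := by
        rw [Finset.sum_mul]
        refine Finset.sum_congr rfl fun j _ => ?_
        rw [← Finset.mul_prod_erase Finset.univ u (Finset.mem_univ j),
          ← mul_assoc, div_mul_cancel₀ _ (hu j)]
      rw [h0, zero_mul] at heq
      exact heq.symm
    have hcard : ∀ j : Fin n, (Finset.univ.erase j).card = n - 1 := by
      intro j
      rw [Finset.card_erase_of_mem (Finset.mem_univ j), Finset.card_univ,
        Fintype.card_fin]
    -- step B : expansion of each product
    have hexp : ∀ j : Fin n, ∏ j' ∈ Finset.univ.erase j, u j'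
        = ∑ s ∈ (Finset.univ.erase j).powerset, ∏ j' ∈ s, (lam j' z * E) := by
      intro j
      have h1' : ∏ j' ∈ Finset.univ.erase j, u j'
          = ∏ j' ∈ Finset.univ.erase j, (lam j' z * E + 1) :=
        Finset.prod_congr rfl fun j' _ => add_comm _ _
      rw [h1', Finset.prod_add]
      simp
    -- step C : the main identity
    have hmain : G z * E ^ (n - 1)
        = -∑ j, (a j : ℂ) * ∑ s ∈ ((Finset.univ.erase j).powerset).erase
            (Finset.univ.erase j), ∏ j' ∈ s, (lam j' z * E) := by
      have hGE : G z * E ^ (n - 1)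
          = ∑ j, (a j : ℂ) * ∏ j' ∈ Finset.univ.erase j, (lam j' z * E) := by
        rw [hGdef, Finset.sum_mul]
        refine Finset.sum_congr rfl fun j _ => ?_
        rw [Finset.prod_mul_distrib, Finset.prod_const, hcard j, mul_assoc]
      have hsplit : ∀ j : Fin n,
          ∑ s ∈ (Finset.univ.erase j).powerset, ∏ j' ∈ s, (lam j' z * E)
          = (∏ j' ∈ Finset.univ.erase j, (lam j' z * E))
            + ∑ s ∈ ((Finset.univ.erase j).powerset).erase (Finset.univ.erase j),
                ∏ j' ∈ s, (lam j' z * E) := by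
        intro j
        exact (Finset.add_sum_erase _ (fun s => ∏ j' ∈ s, (lam j' z * E))
          (Finset.mem_powerset_self _)).symm
      have := hsum0
      rw [Finset.sum_congr rfl (fun j _ => by rw [hexp j, hsplit j])] at this
      simp only [mul_add, Finset.sum_add_distrib] at this
      rw [hGE]
      linear_combination this
    -- norm bound
    have hMEpos : (1:ℝ) ≤ M * ‖E‖ := by nlinarith [h3, norm_nonneg E, hM1]
    have hbound : ‖G z‖ * ‖E‖ ^ (n - 1)
        ≤ (∑ j, ‖(a j : ℂ)‖) * (((2:ℝ) ^ (n - 1) - 1) * (M * ‖E‖) ^ (n - 2)) := by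
      calc ‖G z‖ * ‖E‖ ^ (n - 1) = ‖G z * E ^ (n - 1)‖ := by
            rw [norm_mul, norm_pow]
        _ = ‖∑ j, (a j : ℂ) * ∑ s ∈ ((Finset.univ.erase j).powerset).erase
              (Finset.univ.erase j), ∏ j' ∈ s, (lam j' z * E)‖ := by
            rw [hmain, norm_neg]
        _ ≤ ∑ j, ‖(a j : ℂ) * ∑ s ∈ ((Finset.univ.erase j).powerset).erase
              (Finset.univ.erase j), ∏ j' ∈ s, (lam j' z * E)‖ :=
            norm_sum_le _ _
        _ ≤ ∑ j, ‖(a j : ℂ)‖ * (((2:ℝ) ^ (n - 1) - 1) * (M * ‖E‖) ^ (n - 2)) := by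
            refine Finset.sum_le_sum fun j _ => ?_
            rw [norm_mul]
            refine mul_le_mul_of_nonneg_left ?_ (norm_nonneg _)
            calc ‖∑ s ∈ ((Finset.univ.erase j).powerset).erase (Finset.univ.erase j),
                  ∏ j' ∈ s, (lam j' z * E)‖
                ≤ ∑ s ∈ ((Finset.univ.erase j).powerset).erase (Finset.univ.erase j),
                  ‖∏ j' ∈ s, (lam j' z * E)‖ := norm_sum_le _ _
              _ ≤ ∑ s ∈ ((Finset.univ.erase j).powerset).erase (Finset.univ.erase j),
                  (M * ‖E‖) ^ (n - 2) := by
                  refine Finset.sum_le_sum fun s hs => ?_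
                  have hsub := Finset.mem_powerset.mp (Finset.mem_of_mem_erase hs)
                  have hne' := Finset.ne_of_mem_erase hs
                  have hcards : s.card ≤ n - 2 := by
                    have hlt : s.card < (Finset.univ.erase j).card :=
                      Finset.card_lt_card (lt_of_le_of_ne hsub hne')
                    rw [hcard j] at hlt
                    omega
                  calc ‖∏ j' ∈ s, (lam j' z * E)‖ = ∏ j' ∈ s, ‖lam j' z * E‖ := by
                        rw [norm_prod]
                    _ ≤ ∏ j' ∈ s, (M * ‖E‖) := by
                        refine Finset.prod_le_prod (fun _ _ => norm_nonneg _)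
                          fun j' _ => ?_
                        rw [norm_mul]
                        exact mul_le_mul_of_nonneg_right (h1 j') (norm_nonneg _)
                    _ = (M * ‖E‖) ^ s.card := Finset.prod_const _
                    _ ≤ (M * ‖E‖) ^ (n - 2) := pow_le_pow_right₀ hMEpos hcards
              _ ≤ ((2:ℝ) ^ (n - 1) - 1) * (M * ‖E‖) ^ (n - 2) := by
                  rw [Finset.sum_const, nsmul_eq_mul]
                  refine mul_le_mul_of_nonneg_right ?_ (by positivity)
                  have : (((Finset.univ.erase j).powerset).erase
                      (Finset.univ.erase j)).card = 2 ^ (n - 1) - 1 := by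
                    rw [Finset.card_erase_of_mem (Finset.mem_powerset_self _),
                      Finset.card_powerset, hcard j]
                  rw [this]
                  push_cast [Nat.cast_sub (Nat.one_le_two_pow)]
                  norm_num
        _ = (∑ j, ‖(a j : ℂ)‖) * (((2:ℝ) ^ (n - 1) - 1) * (M * ‖E‖) ^ (n - 2)) := by
            rw [← Finset.sum_mul]
    -- lower bound on ‖G z‖
    have hGlow : c * ‖z - zs‖ ^ k ≤ ‖G z‖ := by
      rw [h4, norm_mul, norm_pow, mul_comm c]
      exact mul_le_mul_of_nonneg_left h5 (by positivity)
    have hfinal : c * ‖z - zs‖ ^ k * ‖E‖ ^ (n - 1) ≤ A * ‖E‖ ^ (n - 2) := by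
      calc c * ‖z - zs‖ ^ k * ‖E‖ ^ (n - 1)
          ≤ ‖G z‖ * ‖E‖ ^ (n - 1) :=
            mul_le_mul_of_nonneg_right hGlow (by positivity)
        _ ≤ (∑ j, ‖(a j : ℂ)‖) * (((2:ℝ) ^ (n - 1) - 1) * (M * ‖E‖) ^ (n - 2)) :=
            hbound
        _ = A * ‖E‖ ^ (n - 2) := by rw [hAdef, mul_pow]; ring
    have hEnorm : ‖E‖ = Real.exp (w * (f z).re) := hnormE z
    rcases eq_or_lt_of_le hn with hn1 | hn2
    · -- n = 1
      have e1 : n - 1 = 0 := by omega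
      have e2 : n - 2 = 0 := by omega
      have hA0 : A = 0 := by rw [hAdef, e1, e2]; norm_num
      have hfin1 : c * ‖z - zs‖ ^ k ≤ 0 := by
        simpa [e1, e2, hA0] using hfinal
      have hX : ‖z - zs‖ ^ k ≤ 0 := by nlinarith [hc]
      have hX0 : ‖z - zs‖ ^ k = 0 :=
        le_antisymm hX (by positivity)
      have hB0 : B = 0 := by rw [hBdef, hA0, zero_div]
      rw [hB0, hX0, zero_mul] at h6
      exact lt_irrefl 0 h6
    · -- n ≥ 2
      obtain ⟨m, rfl⟩ : ∃ m, n = m + 2 := ⟨n - 2, by omega⟩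
      have e1 : m + 2 - 1 = m + 1 := by omega
      have e2 : m + 2 - 2 = m := by omega
      rw [e1, e2] at hfinal
      have hEpos : (0:ℝ) < ‖E‖ := lt_of_lt_of_le one_pos h3
      have hEm : (0:ℝ) < ‖E‖ ^ m := by positivity
      have step : (c * (‖z - zs‖ ^ k * ‖E‖)) * ‖E‖ ^ m ≤ A * ‖E‖ ^ m := by
        calc (c * (‖z - zs‖ ^ k * ‖E‖)) * ‖E‖ ^ m
            = c * ‖z - zs‖ ^ k * ‖E‖ ^ (m + 1) := by rw [pow_succ]; ring
          _ ≤ A * ‖E‖ ^ m := hfinal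
      have step2 : c * (‖z - zs‖ ^ k * ‖E‖) ≤ A :=
        le_of_mul_le_mul_right step hEm
      have hF : ‖z - zs‖ ^ k * Real.exp (w * (f z).re) ≤ B := by
        rw [hBdef, le_div_iff₀ hc, ← hEnorm, mul_comm]
        exact step2
      exact absurd h6 (not_lt.mpr hF)
  refine ⟨key, ?_⟩
  have h0 := hli (fun j => (a j : ℂ)) key
  funext j
  have h1 : (a j : ℂ) = 0 := by simpa using congrFun h0 j
  exact_mod_cast h1
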